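/- Let G be a finite group and let U_1, ..., U_n, V be subgroups of G such that [G:U_i] = n·r_i for 1 ≤ i ≤ n and [G:V] = n·r, where r_1, ..., r_n, r are pairwise coprime positive integers. Assume that α(U_i, V) = 1 for every 1 ≤ i ≤ n. Then the tuple (U_1, ..., U_n, V) is not harmonic; i.e. there do not exist g_1, ..., g_n, g_v ∈ G such that the cosets g_1U_1, ..., g_nU_n, g_vV are pairwise disjoint. -/

import Mathlib

open scoped Pointwise

/-- `alphaIdx A B` is the integer `α(A,B)` satisfying
`[G : A ⊓ B] = lcm([G:A],[G:B]) · α(A,B)`. -/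
noncomputable def alphaIdx {G : Type*} [Group G] (A B : Subgroup G) : ℕ :=
  (A ⊓ B).index / Nat.lcm A.index B.index

/-- In a finite group, if two subgroups have coprime indices then every element is a
product of an element of the first and an element of the second. -/
lemma exists_mul_eq_of_coprime_index {Γ : Type*} [Group Γ] [Finite Γ] (A B : Subgroup Γ)
    (h : Nat.Coprime A.index B.index) (z : Γ) :
    ∃ a ∈ A, ∃ b ∈ B, z = a * b := by
  have hne : (A ⊓ B).index ≠ 0 := Subgroup.index_ne_zero_of_finite
  have hdvd : A.index * B.index ∣ (A ⊓ B).index :=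
    h.mul_dvd_of_dvd_of_dvd (Subgroup.index_dvd_of_le inf_le_left)
      (Subgroup.index_dvd_of_le inf_le_right)
  have hinf : (A ⊓ B).index = A.index * B.index :=
    le_antisymm Subgroup.index_inf_le (Nat.le_of_dvd (Nat.pos_of_ne_zero hne) hdvd)
  let f : (Γ ⧸ (A ⊓ B)) → (Γ ⧸ A) × (Γ ⧸ B) := fun q =>
    (Subgroup.quotientMapOfLE inf_le_left q, Subgroup.quotientMapOfLE inf_le_right q)
  have hinj : Function.Injective f := by
    refine Quotient.ind₂' ?_
    intro a b hab
    simp only [f, Subgroup.quotientMapOfLE_apply_mk, Prod.mk.injEq, QuotientGroup.eq] at hab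
    exact Quotient.sound' (QuotientGroup.leftRel_apply.mpr
      (Subgroup.mem_inf.mpr ⟨hab.1, hab.2⟩))
  have hsurj : Function.Surjective f :=
    ((Nat.bijective_iff_injective_and_card f).mpr ⟨hinj, by
      rw [Nat.card_prod, ← Subgroup.index_eq_card, ← Subgroup.index_eq_card,
        ← Subgroup.index_eq_card, hinf]⟩).2
  obtain ⟨q, hq⟩ := hsurj ((QuotientGroup.mk 1 : Γ ⧸ A), (QuotientGroup.mk z : Γ ⧸ B))
  obtain ⟨w, rfl⟩ := QuotientGroup.mk_surjective q
  simp only [f, Subgroup.quotientMapOfLE_apply_mk, Prod.mk.injEq] at hq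
  obtain ⟨h1, h2⟩ := hq
  have hw : w ∈ A := by
    have := QuotientGroup.eq.mp h1
    rw [mul_one] at this
    exact (inv_mem_iff).mp this
  have hwz : w⁻¹ * z ∈ B := QuotientGroup.eq.mp h2
  exact ⟨w, hw, w⁻¹ * z, hwz, by rw [mul_inv_cancel_left]⟩

/-- The natural map `W ⧸ (V.subgroupOf W) → G ⧸ V` sending `u` to the coset `x*u V`. -/
def cosetMap {G : Type*} [Group G] (V W : Subgroup G) (x : G) :
    (↥W ⧸ V.subgroupOf W) → G ⧸ V :=
  Quotient.map' (fun u : ↥W => x * (u : G)) (fun a b hab => by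
    rw [QuotientGroup.leftRel_apply] at hab ⊢
    have hmem : ((a : G))⁻¹ * (b : G) ∈ V := by
      simpa [Subgroup.mem_subgroupOf] using hab
    have e : (x * (a : G))⁻¹ * (x * (b : G)) = ((a : G))⁻¹ * (b : G) := by group
    rwa [e])

lemma cosetMap_mk {G : Type*} [Group G] (V W : Subgroup G) (x : G) (u : ↥W) :
    cosetMap V W x (QuotientGroup.mk u) = QuotientGroup.mk (x * (u : G)) := rfl

theorem not_harmonic_of_all_alphas_one
    (G : Type*) [Group G] [Fintype G]
    (n : ℕ) (U : Fin n → Subgroup G) (V : Subgroup G)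
    (r : ℕ) (ri : Fin n → ℕ) (hrpos : 0 < r) (hripos : ∀ i, 0 < ri i)
    (hUidx : ∀ i, (U i).index = n * ri i) (hVidx : V.index = n * r)
    (hcop : ∀ i j : Fin n, i ≠ j → Nat.Coprime (ri i) (ri j))
    (hcopr : ∀ i, Nat.Coprime (ri i) r)
    (halpha : ∀ i, alphaIdx (U i) V = 1) :
    ¬ ∃ (g : Fin n → G) (gv : G),
      (∀ i j : Fin n, i ≠ j →
        Disjoint (g i • (U i : Set G)) (g j • (U j : Set G))) ∧
      (∀ i : Fin n, Disjoint (g i • (U i : Set G)) (gv • (V : Set G))) := by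
  rintro ⟨g, gv, hdisj, hdisjV⟩
  have hVne : V.index ≠ 0 := Subgroup.index_ne_zero_of_finite
  have hn : 0 < n := by
    rcases Nat.eq_zero_or_pos n with h | h
    · exact absurd hVidx (by rw [h, zero_mul]; exact hVne)
    · exact h
  have hnr : 0 < n * r := Nat.mul_pos hn hrpos
  -- index of the intersections
  have hinf : ∀ i, (U i ⊓ V).index = n * (ri i * r) := by
    intro i
    have hlcm : Nat.lcm (U i).index V.index ∣ (U i ⊓ V).index :=
      Nat.lcm_dvd (Subgroup.index_dvd_of_le inf_le_left)
        (Subgroup.index_dvd_of_le inf_le_right)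
    have h2 := halpha i
    unfold alphaIdx at h2
    have h1 : (U i ⊓ V).index = Nat.lcm (U i).index V.index := by
      calc (U i ⊓ V).index
          = (U i ⊓ V).index / Nat.lcm (U i).index V.index * Nat.lcm (U i).index V.index :=
            (Nat.div_mul_cancel hlcm).symm
        _ = Nat.lcm (U i).index V.index := by rw [h2, one_mul]
    rw [h1, hUidx, hVidx, Nat.lcm_mul_left, (hcopr i).lcm_eq_mul]
  -- relative index of V inside U i
  have hrelr : ∀ i, V.relIndex (U i) = r := by
    intro i
    have h1 : (V ⊓ U i).relIndex (U i) * (U i).index = (V ⊓ U i).index :=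
      Subgroup.relIndex_mul_index inf_le_right
    rw [Subgroup.inf_relIndex_right, inf_comm, hinf i, hUidx i] at h1
    apply Nat.eq_of_mul_eq_mul_right (Nat.mul_pos hn (hripos i))
    rw [h1]; ring
  -- relative index of U i ⊓ V inside V
  have hreli : ∀ i, (U i ⊓ V).relIndex V = ri i := by
    intro i
    have h1 : (U i ⊓ V).relIndex V * V.index = (U i ⊓ V).index :=
      Subgroup.relIndex_mul_index inf_le_right
    rw [hVidx, hinf i] at h1
    apply Nat.eq_of_mul_eq_mul_right hnr
    rw [h1]; ring
  -- key: two cosets g i • U i and g j • U j cannot both meet a single left coset of V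
  have key : ∀ (i j : Fin n), i ≠ j → ∀ p q : G, p ∈ g i • (U i : Set G) →
      q ∈ g j • (U j : Set G) → p⁻¹ * q ∈ V → False := by
    intro i j hij p q hp hq hpq
    obtain ⟨u, hu, rfl⟩ := hp
    obtain ⟨w, hw, rfl⟩ := hq
    simp only [smul_eq_mul] at hpq
    have hcop' : Nat.Coprime ((U i ⊓ V).subgroupOf V).index ((U j ⊓ V).subgroupOf V).index := by
      have e1 : ((U i ⊓ V).subgroupOf V).index = ri i := hreli i
      have e2 : ((U j ⊓ V).subgroupOf V).index = ri j := hreli j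
      rw [e1, e2]; exact hcop i j hij
    obtain ⟨a, ha, b, hb, hab⟩ := exists_mul_eq_of_coprime_index
      ((U i ⊓ V).subgroupOf V) ((U j ⊓ V).subgroupOf V) hcop' ⟨_, hpq⟩
    rw [Subgroup.mem_subgroupOf] at ha hb
    have haU : (a : G) ∈ U i := ha.1
    have hbU : (b : G) ∈ U j := hb.1
    have habG : (g i * u)⁻¹ * (g j * w) = (a : G) * (b : G) := by
      have := congrArg (Subtype.val) hab
      simpa using this
    have hxmem1 : (g i * u * (a : G)) ∈ g i • (U i : Set G) := by
      refine ⟨u * (a : G), mul_mem hu haU, ?_⟩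
      simp only [smul_eq_mul, mul_assoc]
    have hxmem2 : (g i * u * (a : G)) ∈ g j • (U j : Set G) := by
      refine ⟨w * ((b : G))⁻¹, mul_mem hw (inv_mem hbU), ?_⟩
      simp only [smul_eq_mul]
      have e : g j * w = (g i * u) * ((a : G) * (b : G)) := by
        rw [← habG]; group
      rw [← mul_assoc, e]; group
    exact Set.disjoint_left.mp (hdisj i j hij) hxmem1 hxmem2
  -- the injective map into G ⧸ V
  let Q : Fin n → Type _ := fun i => ↥(U i) ⧸ V.subgroupOf (U i)
  let Φ : (Σ i, Q i) → G ⧸ V := fun x => cosetMap V (U x.1) (g x.1) x.2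
  have hΦinj : Function.Injective Φ := by
    rintro ⟨i, qi⟩ ⟨j, qj⟩ h
    obtain ⟨a, rfl⟩ := QuotientGroup.mk_surjective qi
    obtain ⟨b, rfl⟩ := QuotientGroup.mk_surjective qj
    simp only [Φ, cosetMap_mk] at h
    have hV : (g i * (a : G))⁻¹ * (g j * (b : G)) ∈ V := QuotientGroup.eq.mp h
    by_cases hij : i = j
    · subst hij
      have hab : ((a : G))⁻¹ * (b : G) ∈ V := by
        have e : (g i * (a : G))⁻¹ * (g i * (b : G)) = ((a : G))⁻¹ * (b : G) := by group
        rwa [e] at hV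
      have : (QuotientGroup.mk a : Q i) = QuotientGroup.mk b :=
        QuotientGroup.eq.mpr (by simpa [Subgroup.mem_subgroupOf] using hab)
      rw [this]
    · exact absurd hV (fun hV' => key i j hij _ _ ⟨(a : G), a.2, rfl⟩ ⟨(b : G), b.2, rfl⟩ hV')
  have hgv : (QuotientGroup.mk gv : G ⧸ V) ∉ Set.range Φ := by
    rintro ⟨⟨i, qi⟩, h⟩
    obtain ⟨a, rfl⟩ := QuotientGroup.mk_surjective qi
    simp only [Φ, cosetMap_mk] at h
    have hV : (g i * (a : G))⁻¹ * gv ∈ V := QuotientGroup.eq.mp h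
    have hm : (g i * (a : G)) ∈ gv • (V : Set G) := by
      refine ⟨((g i * (a : G))⁻¹ * gv)⁻¹, inv_mem hV, ?_⟩
      simp only [smul_eq_mul]; group
    exact Set.disjoint_left.mp (hdisjV i) ⟨(a : G), a.2, rfl⟩ hm
  -- counting
  classical
  haveI : ∀ i, Fintype (Q i) := fun i => Fintype.ofFinite _
  have hQcard : ∀ i, Nat.card (Q i) = r := by
    intro i
    have e1 : Nat.card (Q i) = (V.subgroupOf (U i)).index := (Subgroup.index_eq_card _).symm
    rw [e1]
    exact hrelr i
  have hcardSig : Nat.card (Σ i, Q i) = n * r := by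
    rw [Nat.card_eq_fintype_card, Fintype.card_sigma]
    have : ∀ i, Fintype.card (Q i) = r := fun i => by
      rw [← Nat.card_eq_fintype_card, hQcard i]
    simp [this, Finset.sum_const, mul_comm]
  have hcardV : Nat.card (G ⧸ V) = n * r := by
    rw [← Subgroup.index_eq_card, hVidx]
  have h1 : Nat.card (Σ i, Q i) = (Set.range Φ).ncard := by
    rw [← Nat.card_coe_set_eq, Nat.card_range_of_injective hΦinj]
  have h2 : (Set.range Φ).ncard < Nat.card (G ⧸ V) := by
    rw [← Set.ncard_univ]
    exact Set.ncard_lt_ncard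
      (Set.ssubset_univ_iff.mpr (fun he => hgv (he ▸ Set.mem_univ _)))
      Set.finite_univ
  rw [hcardSig] at h1
  rw [hcardV] at h2
  rw [← h1] at h2
  exact lt_irrefl _ h2
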